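/- Let I ⊆ ℝ be open and γ : I → ℝ smooth, and define F_γ(t^1,t^2,t^3) = (1/2)(t^1)²t^3 + (1/2)t^1(t^2)² − (1/16)(t^2)⁴γ(t^3) on ℝ² × I. Then F_γ is a WDVV solution (with N = 3 and antidiagonal η) if and only if γ satisfies the Chazy equation γ'''(τ) = 6γ(τ)γ''(τ) − 9(γ'(τ))² for all τ ∈ I. -/

import Mathlib

open scoped BigOperators

/-- Partial derivative of `f` in the `α`-th coordinate direction. -/
noncomputable def pd {N : ℕ} (α : Fin N) (f : (Fin N → ℝ) → ℝ) : (Fin N → ℝ) → ℝ :=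
  fun t => fderiv ℝ f t (Pi.single α 1)

/-- Third partial derivatives `c_{αβγ} = ∂³F/∂t^α∂t^β∂t^γ`. -/
noncomputable def c3 {N : ℕ} (F : (Fin N → ℝ) → ℝ) (α β γ : Fin N) : (Fin N → ℝ) → ℝ :=
  pd α (pd β (pd γ F))

/-- `η_{αβ} = δ_{α+β,N+1}` (in 1-based index notation); in 0-based indexing this is
`β = Fin.rev α`.  It coincides with its own inverse `η^{αβ}`. -/
def eta {N : ℕ} (α β : Fin N) : ℝ := if β = α.rev then 1 else 0

/-- The index of the coordinate `t^N` (0-based: `N-1`). -/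
def lastIdx (N : ℕ) [NeZero N] : Fin N := (0 : Fin N).rev

/-- `F` is a WDVV solution on `U`: smoothness, normalization `c_{1αβ} = η_{αβ}`, and the
associativity equations. -/
def IsWDVV {N : ℕ} [NeZero N] (F : (Fin N → ℝ) → ℝ) (U : Set (Fin N → ℝ)) : Prop :=
  (∀ t ∈ U, ContDiffAt ℝ (⊤ : ℕ∞) F t) ∧
  (∀ t ∈ U, ∀ α β : Fin N, c3 F 0 α β t = eta α β) ∧
  (∀ t ∈ U, ∀ α β γ δ : Fin N,
    ∑ lam, ∑ mu, c3 F α β lam t * eta lam mu * c3 F mu δ γ t =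
    ∑ lam, ∑ mu, c3 F δ β lam t * eta lam mu * c3 F mu α γ t)

/-- `F` is quasihomogeneous on `U` with charges `q` and weight `d`:
`q_1 = 0`, `q_N = d`, `q_α + q_{N+1-α} = d`, and `E(F) = (3-d) F` modulo a polynomial of
degree at most `2`, where `E = Σ_α (1-q_α) t^α ∂_α`. -/
def IsQH {N : ℕ} [NeZero N] (F : (Fin N → ℝ) → ℝ) (U : Set (Fin N → ℝ))
    (q : Fin N → ℝ) (d : ℝ) : Prop :=
  q 0 = 0 ∧ q (lastIdx N) = d ∧ (∀ α : Fin N, q α + q α.rev = d) ∧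
  ∃ Q : MvPolynomial (Fin N) ℝ, Q.totalDegree ≤ 2 ∧
    ∀ t ∈ U, (∑ α, (1 - q α) * t α * pd α F t) = (3 - d) * F t + MvPolynomial.eval t Q

/-- The inversion map `t ↦ t̂`:
`t̂^1 = (1/2) t_σ t^σ / t^N`, `t̂^α = t^α/t^N` (`1<α<N`), `t̂^N = -1/t^N`,
with `t_σ t^σ = Σ_σ t^σ t^{N+1-σ}`. -/
noncomputable def invMap {N : ℕ} [NeZero N] (t : Fin N → ℝ) : Fin N → ℝ := fun α =>
  if α = 0 then (∑ σ, t σ * t σ.rev) / (2 * t (lastIdx N))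
  else if α = lastIdx N then -1 / t (lastIdx N)
  else t α / t (lastIdx N)

/-- The inverse of the inversion map, `t̂ ↦ t`:
`t^1 = (1/2) t̂_σ t̂^σ / t̂^N`, `t^α = -t̂^α/t̂^N` (`1<α<N`), `t^N = -1/t̂^N`. -/
noncomputable def invMapInv {N : ℕ} [NeZero N] (s : Fin N → ℝ) : Fin N → ℝ := fun α =>
  if α = 0 then (∑ σ, s σ * s σ.rev) / (2 * s (lastIdx N))
  else if α = lastIdx N then -1 / s (lastIdx N)
  else -(s α) / s (lastIdx N)

/-- The inverted prepotential `F̂(t̂) = (t̂^N)² F(t(t̂)) + (1/2) t̂^1 t̂_σ t̂^σ`. -/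
noncomputable def invF {N : ℕ} [NeZero N] (F : (Fin N → ℝ) → ℝ) : (Fin N → ℝ) → ℝ :=
  fun s => (s (lastIdx N))^2 * F (invMapInv s) + (1/2) * s 0 * (∑ σ, s σ * s σ.rev)


/- ### Auxiliary machinery for Statement 4 -/

abbrev P3 := Fin 3 → ℝ

noncomputable def prj (i : Fin 3) : P3 →L[ℝ] ℝ := ContinuousLinearMap.proj i

lemma hasco (i : Fin 3) (t : P3) : HasFDerivAt (fun t : P3 => t i) (prj i) t :=
  (prj i).hasFDerivAt

lemma hasco_pow (n : ℕ) (i : Fin 3) (t : P3) :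
    HasFDerivAt (fun t : P3 => (t i) ^ n) (((n : ℝ) * (t i) ^ (n - 1)) • prj i) t :=
  (hasDerivAt_pow n (t i)).comp_hasFDerivAt t (hasco i t)

lemma hasco_comp {g : ℝ → ℝ} {g' : ℝ} (t : P3) (hg : HasDerivAt g g' (t 2)) :
    HasFDerivAt (fun t : P3 => g (t 2)) (g' • prj 2) t :=
  hg.comp_hasFDerivAt t (hasco 2 t)

lemma pd_eq_of {f : P3 → ℝ} {L : P3 →L[ℝ] ℝ} {t : P3} (h : HasFDerivAt f L t) (α : Fin 3) :
    pd α f t = L (Pi.single α 1) := by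
  simp only [pd, h.fderiv]

lemma pd_congrU {U : Set P3} (hU : IsOpen U) {f g : P3 → ℝ} (hfg : ∀ x ∈ U, f x = g x)
    {t : P3} (ht : t ∈ U) (α : Fin 3) : pd α f t = pd α g t := by
  have h : f =ᶠ[nhds t] g := Filter.eventuallyEq_of_mem (hU.mem_nhds ht) hfg
  simp only [pd, h.fderiv_eq]

lemma pd_coord (i α : Fin 3) (t : P3) :
    pd α (fun t : P3 => t i) t = if i = α then 1 else 0 := by
  rw [pd_eq_of (hasco i t)]
  simp [prj, Pi.single_apply]

section gam

variable (γ : ℝ → ℝ) (t : P3)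

lemma pdF (hg : HasDerivAt γ (deriv γ (t 2)) (t 2)) (α : Fin 3) :
    pd α (fun t : P3 =>
        (1/2) * (t 0)^2 * t 2 + (1/2) * t 0 * (t 1)^2 - (1/16) * (t 1)^4 * γ (t 2)) t
    = ![fun t : P3 => t 0 * t 2 + (1/2) * (t 1)^2,
       fun t : P3 => t 0 * t 1 - (1/4) * (t 1)^3 * γ (t 2),
       fun t : P3 => (1/2) * (t 0)^2 - (1/16) * (t 1)^4 * deriv γ (t 2)] α t := by
  have h := ((((hasco_pow 2 0 t).const_mul (1/2 : ℝ)).mul (hasco 2 t)).add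
      (((hasco 0 t).const_mul (1/2 : ℝ)).mul (hasco_pow 2 1 t))).sub
      (((hasco_pow 4 1 t).const_mul (1/16 : ℝ)).mul (hasco_comp t hg))
  erw [pd_eq_of h]
  fin_cases α <;> simp [prj, Pi.single_apply] <;> ring

lemma pdFd0 (α : Fin 3) :
    pd α (fun t : P3 => t 0 * t 2 + (1/2) * (t 1)^2) t = ![t 2, t 1, t 0] α := by
  have h := ((hasco 0 t).mul (hasco 2 t)).add ((hasco_pow 2 1 t).const_mul (1/2 : ℝ))
  erw [pd_eq_of h]
  fin_cases α <;> simp [prj, Pi.single_apply] <;> try ring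

lemma pdFd1 (hg : HasDerivAt γ (deriv γ (t 2)) (t 2)) (α : Fin 3) :
    pd α (fun t : P3 => t 0 * t 1 - (1/4) * (t 1)^3 * γ (t 2)) t
    = ![t 1, t 0 - (3/4) * (t 1)^2 * γ (t 2), -(1/4) * (t 1)^3 * deriv γ (t 2)] α := by
  have h := ((hasco 0 t).mul (hasco 1 t)).sub
      (((hasco_pow 3 1 t).const_mul (1/4 : ℝ)).mul (hasco_comp t hg))
  erw [pd_eq_of h]
  fin_cases α <;> simp [prj, Pi.single_apply] <;> ring

lemma pdFd2 (hg1 : HasDerivAt (deriv γ) (deriv (deriv γ) (t 2)) (t 2)) (α : Fin 3) :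
    pd α (fun t : P3 => (1/2) * (t 0)^2 - (1/16) * (t 1)^4 * deriv γ (t 2)) t
    = ![t 0, -(1/4) * (t 1)^3 * deriv γ (t 2), -(1/16) * (t 1)^4 * deriv (deriv γ) (t 2)] α := by
  have h := ((hasco_pow 2 0 t).const_mul (1/2 : ℝ)).sub
      (((hasco_pow 4 1 t).const_mul (1/16 : ℝ)).mul (hasco_comp t hg1))
  erw [pd_eq_of h]
  fin_cases α <;> simp [prj, Pi.single_apply] <;> ring

lemma pdFdd11 (hg : HasDerivAt γ (deriv γ (t 2)) (t 2)) (α : Fin 3) :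
    pd α (fun t : P3 => t 0 - (3/4) * (t 1)^2 * γ (t 2)) t
    = ![1, -(3/2) * t 1 * γ (t 2), -(3/4) * (t 1)^2 * deriv γ (t 2)] α := by
  have h := (hasco 0 t).sub (((hasco_pow 2 1 t).const_mul (3/4 : ℝ)).mul (hasco_comp t hg))
  erw [pd_eq_of h]
  fin_cases α <;> simp [prj, Pi.single_apply] <;> ring

lemma pdFdd12 (hg1 : HasDerivAt (deriv γ) (deriv (deriv γ) (t 2)) (t 2)) (α : Fin 3) :
    pd α (fun t : P3 => -(1/4) * (t 1)^3 * deriv γ (t 2)) t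
    = ![0, -(3/4) * (t 1)^2 * deriv γ (t 2), -(1/4) * (t 1)^3 * deriv (deriv γ) (t 2)] α := by
  have h := ((hasco_pow 3 1 t).const_mul (-(1/4) : ℝ)).mul (hasco_comp t hg1)
  erw [pd_eq_of h]
  fin_cases α <;> simp [prj, Pi.single_apply] <;> ring

lemma pdFdd22 (hg2 : HasDerivAt (deriv (deriv γ)) (deriv (deriv (deriv γ)) (t 2)) (t 2))
    (α : Fin 3) :
    pd α (fun t : P3 => -(1/16) * (t 1)^4 * deriv (deriv γ) (t 2)) t
    = ![0, -(1/4) * (t 1)^3 * deriv (deriv γ) (t 2),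
        -(1/16) * (t 1)^4 * deriv (deriv (deriv γ)) (t 2)] α := by
  have h := ((hasco_pow 4 1 t).const_mul (-(1/16) : ℝ)).mul (hasco_comp t hg2)
  erw [pd_eq_of h]
  fin_cases α <;> simp [prj, Pi.single_apply] <;> ring

end gam

/-- The table of third derivatives of `F_γ`. -/
noncomputable def Ct (γ : ℝ → ℝ) (α β δ : Fin 3) (t : P3) : ℝ :=
  ![![![0,0,1], ![0,1,0], ![1,0,0]],
    ![![0,1,0],
      ![1, -(3/2) * t 1 * γ (t 2), -(3/4) * (t 1)^2 * deriv γ (t 2)],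
      ![0, -(3/4) * (t 1)^2 * deriv γ (t 2), -(1/4) * (t 1)^3 * deriv (deriv γ) (t 2)]],
    ![![1,0,0],
      ![0, -(3/4) * (t 1)^2 * deriv γ (t 2), -(1/4) * (t 1)^3 * deriv (deriv γ) (t 2)],
      ![0, -(1/4) * (t 1)^3 * deriv (deriv γ) (t 2),
        -(1/16) * (t 1)^4 * deriv (deriv (deriv γ)) (t 2)]]] α β δ

lemma etaval (α β : Fin 3) : eta α β = ![![0,0,1],![0,1,0],![1,0,0]] α β := by
  fin_cases α <;> fin_cases β <;>
    simp [eta, Fin.rev, Fin.ext_iff, Matrix.vecHead, Matrix.vecTail]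

lemma c3val (I : Set ℝ) (hI : IsOpen I) (γ : ℝ → ℝ) (hγ : ContDiffOn ℝ (⊤ : ℕ∞) γ I)
    (t : P3) (ht : t 2 ∈ I) (α β δ : Fin 3) :
    c3 (fun t : P3 =>
        (1/2) * (t 0)^2 * t 2 + (1/2) * t 0 * (t 1)^2 - (1/16) * (t 1)^4 * γ (t 2)) α β δ t
    = Ct γ α β δ t := by
  set U : Set P3 := {t : P3 | t 2 ∈ I} with hU
  have hUopen : IsOpen U := hI.preimage (continuous_apply 2)
  have htU : t ∈ U := ht
  have hγ1 : ContDiffOn ℝ (⊤ : ℕ∞) (deriv γ) I := hγ.deriv_of_isOpen hI (by norm_num)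
  have hγ2 : ContDiffOn ℝ (⊤ : ℕ∞) (deriv (deriv γ)) I := hγ1.deriv_of_isOpen hI (by norm_num)
  have hd0 : ∀ x : P3, x ∈ U → HasDerivAt γ (deriv γ (x 2)) (x 2) := fun x hx =>
    (((hγ.differentiableOn (by norm_num)) (x 2) hx).differentiableAt (hI.mem_nhds hx)).hasDerivAt
  have hd1 : ∀ x : P3, x ∈ U → HasDerivAt (deriv γ) (deriv (deriv γ) (x 2)) (x 2) := fun x hx =>
    (((hγ1.differentiableOn (by norm_num)) (x 2) hx).differentiableAt (hI.mem_nhds hx)).hasDerivAt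
  have hd2 : ∀ x : P3, x ∈ U →
      HasDerivAt (deriv (deriv γ)) (deriv (deriv (deriv γ)) (x 2)) (x 2) := fun x hx =>
    (((hγ2.differentiableOn (by norm_num)) (x 2) hx).differentiableAt (hI.mem_nhds hx)).hasDerivAt
  have H2 : ∀ β δ : Fin 3, ∀ x ∈ U,
      pd β (pd δ (fun t : P3 =>
        (1/2) * (t 0)^2 * t 2 + (1/2) * t 0 * (t 1)^2 - (1/16) * (t 1)^4 * γ (t 2))) x
      = ![![fun t : P3 => t 2, fun t : P3 => t 1, fun t : P3 => t 0],
          ![fun t : P3 => t 1,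
            fun t : P3 => t 0 - (3/4) * (t 1)^2 * γ (t 2),
            fun t : P3 => -(1/4) * (t 1)^3 * deriv γ (t 2)],
          ![fun t : P3 => t 0,
            fun t : P3 => -(1/4) * (t 1)^3 * deriv γ (t 2),
            fun t : P3 => -(1/16) * (t 1)^4 * deriv (deriv γ) (t 2)]] β δ x := by
    intro β δ x hx
    rw [pd_congrU hUopen (fun y hy => pdF γ y (hd0 y hy) δ) hx β]
    fin_cases δ <;> fin_cases β <;>
      simp only [Fin.mk_zero, Fin.mk_one, Fin.reduceFinMk, Matrix.cons_val_zero,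
        Matrix.cons_val_one, Matrix.head_cons, Matrix.cons_val_two, Matrix.tail_cons] <;>
      [rw [pdFd0 x]; rw [pdFd0 x]; rw [pdFd0 x];
       rw [pdFd1 γ x (hd0 x hx)]; rw [pdFd1 γ x (hd0 x hx)]; rw [pdFd1 γ x (hd0 x hx)];
       rw [pdFd2 γ x (hd1 x hx)]; rw [pdFd2 γ x (hd1 x hx)]; rw [pdFd2 γ x (hd1 x hx)]] <;>
      simp
  show pd α _ t = _
  rw [pd_congrU hUopen (H2 β δ) htU α]
  fin_cases β <;> fin_cases δ <;>
    simp only [Fin.mk_zero, Fin.mk_one, Fin.reduceFinMk, Matrix.cons_val_zero,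
      Matrix.cons_val_one, Matrix.head_cons, Matrix.cons_val_two, Matrix.tail_cons] <;>
    [rw [pd_coord]; rw [pd_coord]; rw [pd_coord];
     rw [pd_coord]; rw [pdFdd11 γ t (hd0 t htU)]; rw [pdFdd12 γ t (hd1 t htU)];
     rw [pd_coord]; rw [pdFdd12 γ t (hd1 t htU)]; rw [pdFdd22 γ t (hd2 t htU)]] <;>
    fin_cases α <;>
    simp [Ct, Fin.mk_zero, Fin.mk_one, Fin.reduceFinMk, Matrix.vecHead, Matrix.vecTail] <;>
    try ring

/-- `F_γ = (1/2)(t¹)²t³ + (1/2)t¹(t²)² - (1/16)(t²)⁴γ(t³)` is a WDVV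
solution on `ℝ² × I` iff `γ` satisfies the Chazy equation
`γ''' = 6γγ'' - 9(γ')²` on `I`. -/
theorem statement4 (I : Set ℝ) (hI : IsOpen I)
    (γ : ℝ → ℝ) (hγ : ContDiffOn ℝ (⊤ : ℕ∞) γ I) :
    IsWDVV (fun t : Fin 3 → ℝ =>
        (1/2) * (t 0)^2 * t 2 + (1/2) * t 0 * (t 1)^2 - (1/16) * (t 1)^4 * γ (t 2))
      {t : Fin 3 → ℝ | t 2 ∈ I} ↔
    ∀ τ ∈ I, deriv (deriv (deriv γ)) τ =
        6 * γ τ * deriv (deriv γ) τ - 9 * (deriv γ τ) ^ 2 := by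
  have hU2 : ∀ t : P3, t ∈ {t : P3 | t 2 ∈ I} → t 2 ∈ I := fun t ht => ht
  constructor
  · -- WDVV implies Chazy
    intro h τ hτ
    obtain ⟨-, -, h3⟩ := h
    set t : P3 := ![0, 1, τ] with htdef
    have ht2 : t 2 = τ := rfl
    have ht1 : t 1 = 1 := rfl
    have ht : t ∈ {t : P3 | t 2 ∈ I} := by simpa [Set.mem_setOf_eq, ht2] using hτ
    have key := h3 t ht 1 1 2 2
    simp only [Fin.sum_univ_three, c3val I hI γ hγ t (by simpa [ht2] using hτ), etaval,
      Matrix.cons_val_zero, Matrix.cons_val_one, Matrix.head_cons, Matrix.cons_val_two,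
      Matrix.tail_cons, Ct, ht1, ht2] at key
    ring_nf at key ⊢
    nlinarith [key]
  · -- Chazy implies WDVV
    intro hch
    have hc : ∀ (t : P3) (i : Fin 3), ContDiffAt ℝ (⊤ : ℕ∞) (fun t : P3 => t i) t :=
      fun t i => (prj i).contDiff.contDiffAt
    refine ⟨?_, ?_, ?_⟩
    · intro t ht
      have hγc : ContDiffAt ℝ (⊤ : ℕ∞) (fun t : P3 => γ (t 2)) t :=
        (hγ.contDiffAt (hI.mem_nhds ht)).comp t (hc t 2)
      exact (((contDiffAt_const.mul ((hc t 0).pow 2)).mul (hc t 2)).add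
        ((contDiffAt_const.mul (hc t 0)).mul ((hc t 1).pow 2))).sub
        ((contDiffAt_const.mul ((hc t 1).pow 4)).mul hγc)
    · intro t ht α β
      rw [c3val I hI γ hγ t ht, etaval]
      fin_cases α <;> fin_cases β <;>
        simp [Ct, Fin.mk_zero, Fin.mk_one, Fin.reduceFinMk, Matrix.vecHead, Matrix.vecTail]
    · intro t ht α β g δ
      have hf := hch (t 2) ht
      fin_cases α <;> fin_cases β <;> fin_cases g <;> fin_cases δ <;>
        simp only [Fin.sum_univ_three, c3val I hI γ hγ t ht, etaval, Ct,
          Fin.mk_zero, Fin.mk_one, Fin.reduceFinMk, Matrix.cons_val_zero, Matrix.cons_val_one,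
          Matrix.head_cons, Matrix.cons_val_two, Matrix.tail_cons, hf] <;>
        ring
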